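/- Let H be a complex Hilbert space with a Hilbert basis (b_i)_{i ∈ ι}, let E ∈ B(H) be an orthogonal projection (E = E* and E ∘ E = E), and let C ∈ B(H) be a positive operator. Assume that the families (⟪C b_i, b_i⟫)_{i ∈ ι} and (⟪(E ∘ C ∘ E) b_i, b_i⟫)_{i ∈ ι} are summable (i.e., C and ECE have finite trace) and that ∑'_i ⟪C b_i, b_i⟫ = ∑'_i ⟪(E ∘ C ∘ E) b_i, b_i⟫ (equality of traces). Then C ∘ E = E ∘ C = C. -/

import Mathlib

open scoped InnerProductSpace

set_option maxHeartbeats 4000000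
set_option synthInstance.maxHeartbeats 1000000

private lemma hb_norm_sq_row {ι H : Type*}
    [NormedAddCommGroup H] [InnerProductSpace ℂ H] [CompleteSpace H]
    (b : HilbertBasis ι ℂ H) (u : H) :
    HasSum (fun j => ‖⟪u, b j⟫_ℂ‖ ^ 2) (‖u‖ ^ 2) := by
  have h := b.hasSum_inner_mul_inner u u
  have hterm : ∀ j, ⟪u, b j⟫_ℂ * ⟪b j, u⟫_ℂ = ((‖⟪u, b j⟫_ℂ‖ ^ 2 : ℝ) : ℂ) := by
    intro j
    rw [← inner_conj_symm (b j) u, RCLike.mul_conj]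
    norm_cast
  rw [show (⟪u, u⟫_ℂ) = ((‖u‖ ^ 2 : ℝ) : ℂ) by
        rw [inner_self_eq_norm_sq_to_K]; norm_cast] at h
  exact Complex.hasSum_ofReal.mp (h.congr_fun fun j => (hterm j).symm)


private lemma exists_sqrt {H : Type*}
    [NormedAddCommGroup H] [InnerProductSpace ℂ H] [CompleteSpace H]
    (C : H →L[ℂ] H) (hC : C.IsPositive) :
    ∃ S : H →L[ℂ] H, S.IsPositive ∧ ∀ x, S (S x) = C x := by
  refine ⟨CFC.sqrt C, (CFC.sqrt C).nonneg_iff_isPositive.mp (CFC.sqrt_nonneg C), fun x => ?_⟩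
  have h0 : CFC.sqrt C * CFC.sqrt C = C := CFC.sqrt_mul_sqrt_self C (C.nonneg_iff_isPositive.mpr hC)
  calc CFC.sqrt C (CFC.sqrt C x) = (CFC.sqrt C * CFC.sqrt C) x := rfl
  _ = C x := by rw [h0]

/-- **Lemma 3.3.** If `E` is an orthogonal projection and `C` a positive trace-class
operator with `tr C = tr (E C E)`, then `C = C E = E C`. -/
theorem eq_of_trace_eq_trace_proj {ι H : Type*}
    [NormedAddCommGroup H] [InnerProductSpace ℂ H] [CompleteSpace H]
    (b : HilbertBasis ι ℂ H) (E C : H →L[ℂ] H)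
    (hE : IsSelfAdjoint E) (hE2 : E ∘L E = E) (hC : C.IsPositive)
    (h1 : Summable fun i => ⟪C (b i), b i⟫_ℂ)
    (h2 : Summable fun i => ⟪(E ∘L C ∘L E) (b i), b i⟫_ℂ)
    (heq : ∑' i, ⟪C (b i), b i⟫_ℂ = ∑' i, ⟪(E ∘L C ∘L E) (b i), b i⟫_ℂ) :
    C ∘L E = C ∧ E ∘L C = C := by
  classical
  -- square root of `C`
  obtain ⟨S, hSpos, hSS⟩ := exists_sqrt C hC
  have hSadj : ContinuousLinearMap.adjoint S = S :=
    ContinuousLinearMap.isSelfAdjoint_iff'.mp hSpos.isSelfAdjoint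
  have hEadj : ContinuousLinearMap.adjoint E = E :=
    ContinuousLinearMap.isSelfAdjoint_iff'.mp hE
  have hCadj : ContinuousLinearMap.adjoint C = C :=
    ContinuousLinearMap.isSelfAdjoint_iff'.mp hC.isSelfAdjoint
  have hSinner : ∀ x y : H, ⟪S x, y⟫_ℂ = ⟪x, S y⟫_ℂ := by
    intro x y
    conv_lhs => rw [← hSadj]
    exact ContinuousLinearMap.adjoint_inner_left S y x
  have hEinner : ∀ x y : H, ⟪E x, y⟫_ℂ = ⟪x, E y⟫_ℂ := by
    intro x y
    conv_lhs => rw [← hEadj]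
    exact ContinuousLinearMap.adjoint_inner_left E y x
  have hCS : ∀ x y : H, ⟪C x, y⟫_ℂ = ⟪S x, S y⟫_ℂ := by
    intro x y
    rw [← hSS x, hSinner]
  -- complementary projection
  set F : H →L[ℂ] H := 1 - E with hFdef
  have hFapp : ∀ x, F x = x - E x := fun x => rfl
  have hFinner : ∀ x y : H, ⟪F x, y⟫_ℂ = ⟪x, F y⟫_ℂ := by
    intro x y
    simp only [hFapp, inner_sub_left, inner_sub_right, hEinner]
  have hEE : ∀ x, E (E x) = E x := fun x => DFunLike.congr_fun hE2 x
  have hEF : ∀ x, E (F x) = 0 := by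
    intro x
    rw [hFapp, map_sub, hEE, sub_self]
  -- real sequences
  set a : ι → ℝ := fun i => ‖S (b i)‖ ^ 2 with hadef
  set e : ι → ℝ := fun i => ‖S (E (b i))‖ ^ 2 with hedef
  set f : ι → ℝ := fun i => ‖S (F (b i))‖ ^ 2 with hfdef
  have hCnorm : ∀ x : H, ⟪C x, x⟫_ℂ = ((‖S x‖ ^ 2 : ℝ) : ℂ) := by
    intro x
    rw [hCS, inner_self_eq_norm_sq_to_K]
    norm_cast
  have hECE : ∀ x : H, ⟪(E ∘L C ∘L E) x, x⟫_ℂ = ((‖S (E x)‖ ^ 2 : ℝ) : ℂ) := by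
    intro x
    have h0 : (E ∘L C ∘L E) x = E (C (E x)) := rfl
    rw [h0, hEinner, hCS, inner_self_eq_norm_sq_to_K]
    norm_cast
  have h1' : Summable a := by
    rw [← Complex.summable_ofReal]
    exact h1.congr fun i => hCnorm (b i)
  have h2' : Summable e := by
    rw [← Complex.summable_ofReal]
    exact h2.congr fun i => hECE (b i)
  have heq' : ∑' i, a i = ∑' i, e i := by
    have h0 : ((∑' i, a i : ℝ) : ℂ) = ((∑' i, e i : ℝ) : ℂ) := by
      rw [Complex.ofReal_tsum, Complex.ofReal_tsum]
      calc (∑' i, ((a i : ℝ) : ℂ)) = ∑' i, ⟪C (b i), b i⟫_ℂ :=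
            tsum_congr fun i => (hCnorm (b i)).symm
      _ = ∑' i, ⟪(E ∘L C ∘L E) (b i), b i⟫_ℂ := heq
      _ = ∑' i, ((e i : ℝ) : ℂ) := tsum_congr fun i => hECE (b i)
    exact_mod_cast h0
  -- `f` is summable
  have hf_nonneg : ∀ i, 0 ≤ f i := fun i => sq_nonneg _
  have hf_le : ∀ i, f i ≤ 2 * (a i + e i) := by
    intro i
    have h0 : S (F (b i)) = S (b i) - S (E (b i)) := by rw [hFapp, map_sub]
    have hle : ‖S (F (b i))‖ ≤ ‖S (b i)‖ + ‖S (E (b i))‖ := by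
      rw [h0]; exact norm_sub_le _ _
    have hn1 := norm_nonneg (S (F (b i)))
    have hn2 := norm_nonneg (S (b i))
    have hn3 := norm_nonneg (S (E (b i)))
    have hsq : ‖S (F (b i))‖ ^ 2 ≤ (‖S (b i)‖ + ‖S (E (b i))‖) ^ 2 := by
      nlinarith
    simp only [hfdef, hadef, hedef]
    nlinarith [sq_nonneg (‖S (b i)‖ - ‖S (E (b i))‖)]
  have hf : Summable f :=
    Summable.of_nonneg_of_le hf_nonneg hf_le ((h1'.add h2').mul_left 2)
  -- the cross terms
  set g : ι → ℂ := fun i => ⟪S (E (b i)), S (F (b i))⟫_ℂ with hgdef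
  have hpt : ∀ i, a i = e i + f i + 2 * (g i).re := by
    intro i
    have hsplit : S (b i) = S (E (b i)) + S (F (b i)) := by
      rw [hFapp, map_sub]; abel
    have hns := norm_add_sq (𝕜 := ℂ) (S (E (b i))) (S (F (b i)))
    simp only [hadef, hedef, hfdef, hgdef]
    rw [hsplit, hns]
    simp only [RCLike.re_to_complex]
    ring
  -- double-indexed family
  set p : ι × ι → ℂ :=
    fun q => ⟪S (E (b q.1)), b q.2⟫_ℂ * ⟪b q.2, S (F (b q.1))⟫_ℂ with hpdef
  have hrow : ∀ i, HasSum (fun j => p (i, j)) (g i) :=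
    fun i => b.hasSum_inner_mul_inner (S (E (b i))) (S (F (b i)))
  -- summability of `p`
  have hA : Summable (fun q : ι × ι => ‖⟪S (E (b q.1)), b q.2⟫_ℂ‖ ^ 2) := by
    refine (summable_prod_of_nonneg (fun q => sq_nonneg _)).mpr
      ⟨fun i => (hb_norm_sq_row b (S (E (b i)))).summable, ?_⟩
    exact h2'.congr fun i => ((hb_norm_sq_row b (S (E (b i)))).tsum_eq).symm
  have hB : Summable (fun q : ι × ι => ‖⟪b q.2, S (F (b q.1))⟫_ℂ‖ ^ 2) := by
    refine (summable_prod_of_nonneg (fun q => sq_nonneg _)).mpr ⟨fun i => ?_, ?_⟩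
    · exact ((hb_norm_sq_row b (S (F (b i)))).summable).congr
        fun j => by rw [← norm_inner_symm]
    · refine hf.congr fun i => ?_
      calc f i = ‖S (F (b i))‖ ^ 2 := rfl
      _ = ∑' j, ‖⟪S (F (b i)), b j⟫_ℂ‖ ^ 2 :=
          ((hb_norm_sq_row b (S (F (b i)))).tsum_eq).symm
      _ = ∑' j, ‖⟪b j, S (F (b i))⟫_ℂ‖ ^ 2 :=
          tsum_congr fun j => by rw [norm_inner_symm]
  have hp : Summable p := by
    refine Summable.of_norm (Summable.of_nonneg_of_le (fun q => norm_nonneg _)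
      (fun q => ?_) (((hA.add hB).mul_left (1/2 : ℝ))))
    have h0 : ‖p q‖ = ‖⟪S (E (b q.1)), b q.2⟫_ℂ‖ * ‖⟪b q.2, S (F (b q.1))⟫_ℂ‖ :=
      norm_mul _ _
    rw [h0]
    nlinarith [sq_nonneg (‖⟪S (E (b q.1)), b q.2⟫_ℂ‖ - ‖⟪b q.2, S (F (b q.1))⟫_ℂ‖),
      norm_nonneg (⟪S (E (b q.1)), b q.2⟫_ℂ), norm_nonneg (⟪b q.2, S (F (b q.1))⟫_ℂ)]
  -- columns sum to zero
  have hcol : ∀ j, HasSum (fun i => p (i, j)) 0 := by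
    intro j
    have hterm : ∀ i, p (i, j) = ⟪F (S (b j)), b i⟫_ℂ * ⟪b i, E (S (b j))⟫_ℂ := by
      intro i
      have e1 : ⟪S (E (b i)), b j⟫_ℂ = ⟪b i, E (S (b j))⟫_ℂ := by
        rw [hSinner, hEinner]
      have e2 : ⟪b j, S (F (b i))⟫_ℂ = ⟪F (S (b j)), b i⟫_ℂ := by
        rw [← hSinner, ← hFinner]
      show ⟪S (E (b i)), b j⟫_ℂ * ⟪b j, S (F (b i))⟫_ℂ = _
      rw [e1, e2]; ring
    have hzero : ⟪F (S (b j)), E (S (b j))⟫_ℂ = 0 := by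
      rw [← hEinner, hEF, inner_zero_left]
    have h0 := b.hasSum_inner_mul_inner (F (S (b j))) (E (S (b j)))
    rw [hzero] at h0
    exact h0.congr_fun hterm
  -- swap the sums: total sum of `g` is zero
  have hg_summable : Summable g :=
    (hp.prod.congr fun i => (hrow i).tsum_eq)
  have hgsum : ∑' i, g i = 0 := by
    have ha1 : ∑' i, g i = ∑' i, ∑' j, p (i, j) :=
      tsum_congr fun i => ((hrow i).tsum_eq).symm
    have ha2 : ∑' (i) (j), p (i, j) = ∑' (j) (i), p (i, j) :=
      (Summable.tsum_comm (f := fun i j => p (i, j)) hp).symm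
    have ha3 : ∑' (j : ι) (i : ι), p (i, j) = 0 := by
      rw [tsum_congr fun j => (hcol j).tsum_eq]
      exact tsum_zero
    rw [ha1, ha2, ha3]
  have hgre : ∑' i, (g i).re = 0 := by
    have h0 := (hg_summable.hasSum.mapL Complex.reCLM)
    rw [hgsum] at h0
    simpa using h0.tsum_eq
  have hgre_summable : Summable fun i => (g i).re :=
    (hg_summable.mapL Complex.reCLM)
  -- conclude `∑ f = 0`
  have hfsum : ∑' i, f i = 0 := by
    have hae : ∀ i, f i = a i - e i - 2 * (g i).re := by
      intro i; have := hpt i; linarith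
    calc ∑' i, f i = ∑' i, (a i - e i - 2 * (g i).re) := tsum_congr hae
    _ = (∑' i, (a i - e i)) - ∑' i, 2 * (g i).re :=
        Summable.tsum_sub (h1'.sub h2') (hgre_summable.mul_left 2)
    _ = ((∑' i, a i) - ∑' i, e i) - 2 * ∑' i, (g i).re := by
        rw [Summable.tsum_sub h1' h2', tsum_mul_left]
    _ = 0 := by rw [heq', hgre]; ring
  -- each `f i` vanishes
  have hfzero : ∀ i, S (F (b i)) = 0 := by
    intro i
    have hle : f i ≤ 0 := hfsum ▸ Summable.le_tsum hf i fun j _ => hf_nonneg j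
    have h0 : f i = 0 := le_antisymm hle (hf_nonneg i)
    have h1 : ‖S (F (b i))‖ = 0 := by
      simp only [hfdef] at h0
      nlinarith [norm_nonneg (S (F (b i)))]
    simpa using h1
  -- hence `C ∘ F = 0`
  have hCF : C ∘L F = 0 := by
    have hdense : Dense ((Submodule.span ℂ (Set.range (b : ι → H)) : Submodule ℂ H) : Set H) :=
      Submodule.dense_iff_topologicalClosure_eq_top.mpr b.dense_span
    refine ContinuousLinearMap.ext_on hdense ?_
    rintro x ⟨i, rfl⟩
    show C (F (b i)) = (0 : H →L[ℂ] H) (b i)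
    rw [← hSS, hfzero, map_zero, ContinuousLinearMap.zero_apply]
  have hCE : C ∘L E = C := by
    have h0 : C ∘L (1 - E) = C - C ∘L E := by
      ext x; simp
    rw [hFdef, h0] at hCF
    have := sub_eq_zero.mp hCF
    exact this.symm
  refine ⟨hCE, ?_⟩
  have h0 : ContinuousLinearMap.adjoint (C ∘L E) = ContinuousLinearMap.adjoint C := by rw [hCE]
  rwa [ContinuousLinearMap.adjoint_comp, hEadj, hCadj] at h0
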